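/- Let w_1, …, w_k be positive integers with w_i ≤ B/2 for all i, where B = Σ_{i=1}^k w_i. Consider the path DPG with agents N = {1, …, k+5}, relationship sets M_i = {i+1} for i ≤ k+4 and M_{k+5} = ∅, and ideal distances d_1(2) = 1, d_2(3) = 1/2, d_i(i+1) = w_{i−2}/B for i ∈ {3, …, k+2}, d_{k+3}(k+4) = 1/2, and d_{k+4}(k+5) = 1. Then there exists a location profile A with SW(A) ≥ k+4 if and only if there exists a subset X ⊆ {1,…,k} with Σ_{i ∈ X} w_i = Σ_{i ∉ X} w_i. -/

import Mathlib

open Finset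

/-- A distance preservation game (DPG): a finite set of agents `N`, for each agent `i` a
relationship set `M i ⊆ N \ {i}`, and an ideal distance `d i j ∈ [0,1]` for each `j ∈ M i`. -/
structure DPG (N : Type) [Fintype N] [DecidableEq N] where
  M : N → Finset N
  notMem_self : ∀ i, i ∉ M i
  d : N → N → ℝ
  d_nonneg : ∀ i j, j ∈ M i → 0 ≤ d i j
  d_le_one : ∀ i j, j ∈ M i → d i j ≤ 1

variable {N : Type} [Fintype N] [DecidableEq N]

/-- The utility of agent `i` from agent `j` under location profile `A`. -/
def DPG.utilPair (I : DPG N) (A : N → ℝ) (i j : N) : ℝ :=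
  1 - |(|A i - A j|) - I.d i j|

/-- The utility of agent `i` under location profile `A`. -/
def DPG.util (I : DPG N) (A : N → ℝ) (i : N) : ℝ :=
  ∑ j ∈ I.M i, I.utilPair A i j

/-- The social welfare of a location profile. -/
def DPG.SW (I : DPG N) (A : N → ℝ) : ℝ := ∑ i, I.util A i

/-- A valid location profile: every agent is located in the unit interval. -/
def IsProfile (A : N → ℝ) : Prop := ∀ i, A i ∈ Set.Icc (0:ℝ) 1

/-- A location profile is jump stable if no agent can increase their utility by jumping
to another location in the unit interval. -/
def DPG.JumpStable (I : DPG N) (A : N → ℝ) : Prop :=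
  ∀ i : N, ∀ x ∈ Set.Icc (0:ℝ) 1, I.util (Function.update A i x) i ≤ I.util A i

/-- A DPG is symmetric if `j ∈ M i` implies `i ∈ M j` and `d i j = d j i`. -/
def DPG.Symmetric (I : DPG N) : Prop :=
  ∀ i j, j ∈ I.M i → i ∈ I.M j ∧ I.d i j = I.d j i

lemma aux_sw {k : ℕ} (I : DPG (Fin (k+5)))
    (hM : ∀ (i : Fin (k+5)) (h : (i:ℕ)+1 < k+5), I.M i = {⟨(i:ℕ)+1, h⟩})
    (hMlast : I.M ⟨k+4, Nat.lt_of_sub_pos (by omega)⟩ = ∅) (A : Fin (k+5) → ℝ) :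
    I.SW A = ∑ i : Fin (k+4), (1 - |(|A i.castSucc - A i.succ|) - I.d i.castSucc i.succ|) := by
  rw [DPG.SW, Fin.sum_univ_castSucc]
  have h1 : I.util A (Fin.last (k+4)) = 0 := by
    have h2 : Fin.last (k+4) = (⟨k+4, by omega⟩ : Fin (k+5)) := rfl
    rw [DPG.util, h2, hMlast, Finset.sum_empty]
  rw [h1, add_zero]
  refine Finset.sum_congr rfl fun i _ => ?_
  have hi : ((i.castSucc : Fin (k+5)) : ℕ) + 1 < k+5 := by
    simp only [Fin.coe_castSucc]; omega
  rw [DPG.util, hM i.castSucc hi, Finset.sum_singleton]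
  have h3 : (⟨((i.castSucc : Fin (k+5)) : ℕ)+1, hi⟩ : Fin (k+5)) = i.succ := by
    ext; simp
  rw [h3, DPG.utilPair]

lemma aux_ge {k : ℕ} (I : DPG (Fin (k+5)))
    (hM : ∀ (i : Fin (k+5)) (h : (i:ℕ)+1 < k+5), I.M i = {⟨(i:ℕ)+1, h⟩})
    (hMlast : I.M ⟨k+4, Nat.lt_of_sub_pos (by omega)⟩ = ∅) (A : Fin (k+5) → ℝ) :
    (k + 4 : ℝ) ≤ I.SW A ↔
      ∀ i : Fin (k+4), |A i.castSucc - A i.succ| = I.d i.castSucc i.succ := by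
  rw [aux_sw I hM hMlast A]
  have hs : ∑ i : Fin (k+4), (1 - |(|A i.castSucc - A i.succ|) - I.d i.castSucc i.succ|)
      = (k+4 : ℝ) - ∑ i : Fin (k+4), |(|A i.castSucc - A i.succ|) - I.d i.castSucc i.succ| := by
    rw [Finset.sum_sub_distrib, Finset.sum_const, card_univ, Fintype.card_fin]
    push_cast; ring
  rw [hs]
  constructor
  · intro h i
    have h0 : ∑ i : Fin (k+4), |(|A i.castSucc - A i.succ|) - I.d i.castSucc i.succ| ≤ 0 := by
      linarith
    have h1 : ∑ i : Fin (k+4), |(|A i.castSucc - A i.succ|) - I.d i.castSucc i.succ| = 0 :=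
      le_antisymm h0 (Finset.sum_nonneg fun i _ => abs_nonneg _)
    have h2 := (Finset.sum_eq_zero_iff_of_nonneg (fun i _ => abs_nonneg _)).mp h1 i (mem_univ i)
    have := abs_eq_zero.mp h2
    linarith [abs_nonneg (A i.castSucc - A i.succ)]
  · intro h
    have : ∀ i : Fin (k+4), |(|A i.castSucc - A i.succ|) - I.d i.castSucc i.succ| = 0 := by
      intro i; rw [h i]; simp
    rw [Finset.sum_congr rfl fun i _ => this i]
    simp

lemma fwd (k : ℕ) (w : Fin k → ℕ) (hw : ∀ i, 0 < w i) (B : ℕ)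
    (hB : B = ∑ i, w i)
    (I : DPG (Fin (k+5)))
    (hd0 : I.d ⟨0, Nat.lt_of_sub_pos (by omega)⟩ ⟨1, Nat.lt_of_sub_pos (by omega)⟩ = 1)
    (hd1 : I.d ⟨1, Nat.lt_of_sub_pos (by omega)⟩ ⟨2, Nat.lt_of_sub_pos (by omega)⟩ = 1/2)
    (hdw : ∀ i : Fin k, I.d ⟨(i:ℕ)+2, Nat.lt_of_sub_pos (by have := i.isLt; omega)⟩
        ⟨(i:ℕ)+3, Nat.lt_of_sub_pos (by have := i.isLt; omega)⟩ = (w i : ℝ) / B)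
    (hd2 : I.d ⟨k+2, Nat.lt_of_sub_pos (by omega)⟩ ⟨k+3, Nat.lt_of_sub_pos (by omega)⟩ = 1/2)
    (hd3 : I.d ⟨k+3, Nat.lt_of_sub_pos (by omega)⟩ ⟨k+4, Nat.lt_of_sub_pos (by omega)⟩ = 1)
    (A : Fin (k+5) → ℝ) (hA : ∀ i, A i ∈ Set.Icc (0:ℝ) 1)
    (h : ∀ i : Fin (k+4), |A i.castSucc - A i.succ| = I.d i.castSucc i.succ) :
    ∃ X : Finset (Fin k), ∑ i ∈ X, w i = ∑ i ∈ Xᶜ, w i := by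
  classical
  rcases Nat.eq_zero_or_pos k with hk | hk
  · subst hk; exact ⟨∅, by simp⟩
  have hBpos : 0 < B := by
    rw [hB]; exact Finset.sum_pos (fun i _ => hw i) ⟨⟨0, hk⟩, mem_univ _⟩
  -- edge facts
  have hedge : ∀ (m : ℕ) (hm : m < k+4),
      |A ⟨m, by omega⟩ - A ⟨m+1, by omega⟩| = I.d ⟨m, by omega⟩ ⟨m+1, by omega⟩ := by
    intro m hm
    have := h ⟨m, hm⟩
    simpa [Fin.castSucc_mk, Fin.succ_mk] using this
  have e0 : |A ⟨0, by omega⟩ - A ⟨1, by omega⟩| = 1 := by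
    rw [hedge 0 (by omega)]; exact hd0
  have e1 : |A ⟨1, by omega⟩ - A ⟨2, by omega⟩| = 1/2 := by
    rw [hedge 1 (by omega)]; exact hd1
  have ew : ∀ i : Fin k, |A ⟨(i:ℕ)+2, by have := i.isLt; omega⟩
      - A ⟨(i:ℕ)+3, by have := i.isLt; omega⟩| = (w i : ℝ) / B := by
    intro i
    have := hedge ((i:ℕ)+2) (by have := i.isLt; omega)
    rw [this]; exact hdw i
  have e2 : |A ⟨k+2, by omega⟩ - A ⟨k+3, by omega⟩| = 1/2 := by
    rw [hedge (k+2) (by omega)]; exact hd2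
  -- endpoint positions
  have ha1 : A ⟨1, by omega⟩ = 0 ∨ A ⟨1, by omega⟩ = 1 := by
    rcases (abs_eq (by norm_num : (0:ℝ) ≤ 1)).mp e0 with h' | h'
    · left; have := (hA ⟨0, by omega⟩).2; have := (hA ⟨1, by omega⟩).1; linarith
    · right; have := (hA ⟨0, by omega⟩).1; have := (hA ⟨1, by omega⟩).2; linarith
  have ha2 : A ⟨2, by omega⟩ = 1/2 := by
    have h2a := (hA ⟨2, by omega⟩).1
    have h2b := (hA ⟨2, by omega⟩).2
    rcases ha1 with h' | h' <;>
      rcases (abs_eq (by norm_num : (0:ℝ) ≤ 1/2)).mp e1 with h'' | h'' <;> linarith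
  -- now edge k+3 : |A (k+3) - A (k+4)| = 1
  have e3 : |A ⟨k+3, by omega⟩ - A ⟨k+4, by omega⟩| = 1 := by
    rw [hedge (k+3) (by omega)]
    exact hd3
  have ha3 : A ⟨k+3, by omega⟩ = 0 ∨ A ⟨k+3, by omega⟩ = 1 := by
    rcases (abs_eq (by norm_num : (0:ℝ) ≤ 1)).mp e3 with h' | h'
    · right; have := (hA ⟨k+4, by omega⟩).1; have := (hA ⟨k+3, by omega⟩).2; linarith
    · left; have := (hA ⟨k+4, by omega⟩).2; have := (hA ⟨k+3, by omega⟩).1; linarith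
  have hak2 : A ⟨k+2, by omega⟩ = 1/2 := by
    have h2a := (hA ⟨k+2, by omega⟩).1
    have h2b := (hA ⟨k+2, by omega⟩).2
    rcases ha3 with h' | h' <;>
      rcases (abs_eq (by norm_num : (0:ℝ) ≤ 1/2)).mp e2 with h'' | h'' <;> linarith
  -- telescoping
  set f : ℕ → ℝ := fun m => if hm : m + 2 < k+5 then A ⟨m+2, hm⟩ else 0 with hf
  have htel : ∑ m ∈ Finset.range k, (f (m+1) - f m) = 0 := by
    rw [Finset.sum_range_sub f k]
    have h1 : f k = A ⟨k+2, by omega⟩ := by rw [hf]; simp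
    have h2 : f 0 = A ⟨2, by omega⟩ := by rw [hf]; simp
    rw [h1, h2, hak2, ha2]; ring
  set X : Finset (Fin k) := Finset.univ.filter
    (fun i : Fin k => A ⟨(i:ℕ)+2, by have := i.isLt; omega⟩
      < A ⟨(i:ℕ)+3, by have := i.isLt; omega⟩) with hX
  have hstep : ∀ i : Fin k, f ((i:ℕ)+1) - f (i:ℕ)
      = if i ∈ X then (w i : ℝ)/B else -((w i : ℝ)/B) := by
    intro i
    have hi := i.isLt
    have h1 : f ((i:ℕ)+1) = A ⟨(i:ℕ)+3, by omega⟩ := by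
      simp only [hf]
      rw [dif_pos (show (i:ℕ)+1+2 < k+5 by omega)]
    have h2 : f (i:ℕ) = A ⟨(i:ℕ)+2, by omega⟩ := by
      simp only [hf]
      rw [dif_pos (show (i:ℕ)+2 < k+5 by omega)]
    rw [h1, h2]
    have habs := ew i
    by_cases hmem : i ∈ X
    · rw [if_pos hmem]
      have hlt : A ⟨(i:ℕ)+2, by omega⟩ < A ⟨(i:ℕ)+3, by omega⟩ := by
        simpa [hX] using hmem
      rw [abs_sub_comm] at habs
      rw [← habs, abs_of_pos (by linarith)]
    · rw [if_neg hmem]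
      have hle : ¬ A ⟨(i:ℕ)+2, by omega⟩ < A ⟨(i:ℕ)+3, by omega⟩ := by
        simpa [hX] using hmem
      push_neg at hle
      rw [abs_sub_comm] at habs
      rw [← habs, abs_of_nonpos (by linarith)]
      ring
  have htel2 : ∑ i : Fin k, (if i ∈ X then (w i : ℝ)/B else -((w i : ℝ)/B)) = 0 := by
    rw [← htel, ← Fin.sum_univ_eq_sum_range (fun m => f (m+1) - f m) k]
    exact Finset.sum_congr rfl fun i _ => (hstep i).symm
  rw [← Finset.sum_add_sum_compl X] at htel2
  have hsum1 : ∑ i ∈ X, (if i ∈ X then (w i : ℝ)/B else -((w i : ℝ)/B)) = ∑ i ∈ X, (w i : ℝ)/B :=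
    Finset.sum_congr rfl fun i hi => by rw [if_pos hi]
  have hsum2 : ∑ i ∈ Xᶜ, (if i ∈ X then (w i : ℝ)/B else -((w i : ℝ)/B))
      = -∑ i ∈ Xᶜ, (w i : ℝ)/B := by
    rw [← Finset.sum_neg_distrib]
    exact Finset.sum_congr rfl fun i hi => by
      rw [if_neg (by simpa using (Finset.mem_compl.mp hi))]
  rw [hsum1, hsum2] at htel2
  have hreal : ∑ i ∈ X, (w i : ℝ) = ∑ i ∈ Xᶜ, (w i : ℝ) := by
    have hBne : (B:ℝ) ≠ 0 := by positivity
    have := htel2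
    rw [← Finset.sum_div, ← Finset.sum_div] at this
    field_simp at this
    linarith
  exact ⟨X, by exact_mod_cast hreal⟩

lemma bwd (k : ℕ) (w : Fin k → ℕ) (hw : ∀ i, 0 < w i) (B : ℕ)
    (hB : B = ∑ i, w i)
    (I : DPG (Fin (k+5)))
    (hM : ∀ (i : Fin (k+5)) (h : (i:ℕ)+1 < k+5), I.M i = {⟨(i:ℕ)+1, h⟩})
    (hMlast : I.M ⟨k+4, Nat.lt_of_sub_pos (by omega)⟩ = ∅)
    (hd0 : I.d ⟨0, Nat.lt_of_sub_pos (by omega)⟩ ⟨1, Nat.lt_of_sub_pos (by omega)⟩ = 1)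
    (hd1 : I.d ⟨1, Nat.lt_of_sub_pos (by omega)⟩ ⟨2, Nat.lt_of_sub_pos (by omega)⟩ = 1/2)
    (hdw : ∀ i : Fin k, I.d ⟨(i:ℕ)+2, Nat.lt_of_sub_pos (by have := i.isLt; omega)⟩
        ⟨(i:ℕ)+3, Nat.lt_of_sub_pos (by have := i.isLt; omega)⟩ = (w i : ℝ) / B)
    (hd2 : I.d ⟨k+2, Nat.lt_of_sub_pos (by omega)⟩ ⟨k+3, Nat.lt_of_sub_pos (by omega)⟩ = 1/2)
    (hd3 : I.d ⟨k+3, Nat.lt_of_sub_pos (by omega)⟩ ⟨k+4, Nat.lt_of_sub_pos (by omega)⟩ = 1)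
    (X : Finset (Fin k)) (hX : ∑ i ∈ X, w i = ∑ i ∈ Xᶜ, w i) :
    ∃ A : Fin (k+5) → ℝ, IsProfile A ∧ (k + 4 : ℝ) ≤ I.SW A := by
  classical
  set t : ℕ → ℝ := fun n => if h : n < k then
      (if (⟨n, h⟩ : Fin k) ∈ X then (w ⟨n, h⟩ : ℝ) else -(w ⟨n, h⟩ : ℝ)) else 0 with ht
  set tp : ℕ → ℝ := fun n => if h : n < k then
      (if (⟨n, h⟩ : Fin k) ∈ X then (w ⟨n, h⟩ : ℝ) else 0) else 0 with htp
  set tn : ℕ → ℝ := fun n => if h : n < k then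
      (if (⟨n, h⟩ : Fin k) ∈ X then 0 else (w ⟨n, h⟩ : ℝ)) else 0 with htn
  set S : ℕ → ℝ := fun m => ∑ n ∈ Finset.range m, t n with hS
  set A : Fin (k+5) → ℝ := fun j =>
    if (j:ℕ) = 0 then 0 else if (j:ℕ) = 1 then 1
    else if (j:ℕ) ≤ k+2 then 1/2 + S ((j:ℕ)-2) / B
    else if (j:ℕ) = k+3 then 0 else 1 with hA
  -- basic sums
  have hXr : ∑ i ∈ X, (w i : ℝ) = ∑ i ∈ Xᶜ, (w i : ℝ) := by exact_mod_cast hX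
  have hBr : ∑ i ∈ X, (w i : ℝ) + ∑ i ∈ Xᶜ, (w i : ℝ) = B := by
    rw [Finset.sum_add_sum_compl]; rw [hB]; push_cast; rfl
  have hXB : ∑ i ∈ X, (w i : ℝ) = (B : ℝ)/2 := by linarith
  have hS0 : S 0 = 0 := by simp [hS]
  have hSk : S k = 0 := by
    have h4 : ∀ i ∈ (univ : Finset (Fin k)),
        t (i:ℕ) = (if i ∈ X then (w i : ℝ) else -(w i : ℝ)) := by
      intro i _
      simp only [ht]
      rw [dif_pos i.isLt]
    simp only [hS]
    rw [← Fin.sum_univ_eq_sum_range t k, Finset.sum_congr rfl h4,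
      ← Finset.sum_add_sum_compl X]
    rw [Finset.sum_congr rfl (fun i hi => if_pos hi),
      Finset.sum_congr rfl (fun i (hi : i ∈ Xᶜ) => if_neg (Finset.mem_compl.mp hi)),
      Finset.sum_neg_distrib]
    linarith
  have htps : ∑ n ∈ Finset.range k, tp n = ∑ i ∈ X, (w i : ℝ) := by
    have h4 : ∀ i ∈ (univ : Finset (Fin k)),
        tp (i:ℕ) = (if i ∈ X then (w i : ℝ) else 0) := by
      intro i _
      simp only [htp]
      rw [dif_pos i.isLt]
    rw [← Fin.sum_univ_eq_sum_range tp k, Finset.sum_congr rfl h4,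
      Finset.sum_ite_mem, Finset.univ_inter]
  have htns : ∑ n ∈ Finset.range k, tn n = ∑ i ∈ Xᶜ, (w i : ℝ) := by
    have h4 : ∀ i ∈ (univ : Finset (Fin k)),
        tn (i:ℕ) = (if i ∈ Xᶜ then (w i : ℝ) else 0) := by
      intro i _
      simp only [htn]
      rw [dif_pos i.isLt]
      by_cases hx : i ∈ X
      · rw [if_pos hx, if_neg (by simpa using hx)]
      · rw [if_neg hx, if_pos (Finset.mem_compl.mpr hx)]
    rw [← Fin.sum_univ_eq_sum_range tn k, Finset.sum_congr rfl h4,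
      Finset.sum_ite_mem, Finset.univ_inter]
  have htp_nonneg : ∀ n, 0 ≤ tp n := by
    intro n; simp only [htp]
    split_ifs <;> simp
  have htn_nonneg : ∀ n, 0 ≤ tn n := by
    intro n; simp only [htn]
    split_ifs <;> simp
  have hup : ∀ m, m ≤ k → S m ≤ (B:ℝ)/2 := by
    intro m hm
    have h1 : S m ≤ ∑ n ∈ Finset.range m, tp n := by
      simp only [hS]
      refine Finset.sum_le_sum fun n _ => ?_
      simp only [ht, htp]
      by_cases h : n < k
      · rw [dif_pos h, dif_pos h]
        by_cases hx : (⟨n, h⟩ : Fin k) ∈ X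
        · rw [if_pos hx, if_pos hx]
        · rw [if_neg hx, if_neg hx]
          simp
      · rw [dif_neg h, dif_neg h]
    have h2 : ∑ n ∈ Finset.range m, tp n ≤ ∑ n ∈ Finset.range k, tp n :=
      Finset.sum_le_sum_of_subset_of_nonneg (Finset.range_subset_range.mpr hm)
        fun n _ _ => htp_nonneg n
    rw [htps, hXB] at h2
    linarith
  have hlo : ∀ m, m ≤ k → -((B:ℝ)/2) ≤ S m := by
    intro m hm
    have h1 : -∑ n ∈ Finset.range m, tn n ≤ S m := by
      simp only [hS]
      rw [← Finset.sum_neg_distrib]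
      refine Finset.sum_le_sum fun n _ => ?_
      simp only [ht, htn]
      by_cases h : n < k
      · rw [dif_pos h, dif_pos h]
        by_cases hx : (⟨n, h⟩ : Fin k) ∈ X
        · rw [if_pos hx, if_pos hx]
          simp
        · rw [if_neg hx, if_neg hx]
      · rw [dif_neg h, dif_neg h]
        simp
    have h2 : ∑ n ∈ Finset.range m, tn n ≤ ∑ n ∈ Finset.range k, tn n :=
      Finset.sum_le_sum_of_subset_of_nonneg (Finset.range_subset_range.mpr hm)
        fun n _ _ => htn_nonneg n
    rw [htns, ← hXr, hXB] at h2
    linarith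
  have hdiv : ∀ m, m ≤ k → -(1/2 : ℝ) ≤ S m / B ∧ S m / B ≤ 1/2 := by
    intro m hm
    rcases Nat.eq_zero_or_pos B with hB0 | hBpos
    · have hk0 : k = 0 := by
        by_contra hk0
        have : 0 < B := by
          rw [hB]
          exact Finset.sum_pos (fun i _ => hw i) ⟨⟨0, Nat.pos_of_ne_zero hk0⟩, mem_univ _⟩
        omega
      have hm0 : m = 0 := by omega
      rw [hm0, hS0]
      norm_num
    · have hBpos' : (0:ℝ) < B := by exact_mod_cast hBpos
      constructor
      · rw [le_div_iff₀ hBpos']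
        have := hlo m hm; linarith
      · rw [div_le_iff₀ hBpos']
        have := hup m hm; linarith
  -- value lemmas (nat-indexed)
  have hv0 : ∀ (mv : ℕ) (h : mv < k+5), mv = 0 → A ⟨mv, h⟩ = 0 := by
    intro mv h hc
    simp only [hA]
    rw [if_pos hc]
  have hv1 : ∀ (mv : ℕ) (h : mv < k+5), mv = 1 → A ⟨mv, h⟩ = 1 := by
    intro mv h hc
    simp only [hA]
    rw [if_neg (by omega), if_pos hc]
  have hvm : ∀ (mv : ℕ) (h : mv < k+5), 2 ≤ mv → mv ≤ k+2 →
      A ⟨mv, h⟩ = 1/2 + S (mv-2) / B := by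
    intro mv h hc1 hc2
    simp only [hA]
    rw [if_neg (by omega), if_neg (by omega), if_pos hc2]
  have hv3 : ∀ (mv : ℕ) (h : mv < k+5), mv = k+3 → A ⟨mv, h⟩ = 0 := by
    intro mv h hc
    simp only [hA]
    rw [if_neg (by omega), if_neg (by omega), if_neg (by omega), if_pos hc]
  have hv4 : ∀ (mv : ℕ) (h : mv < k+5), mv = k+4 → A ⟨mv, h⟩ = 1 := by
    intro mv h hc
    simp only [hA]
    rw [if_neg (by omega), if_neg (by omega), if_neg (by omega), if_neg (by omega)]
  refine ⟨A, ?_, ?_⟩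
  · intro j
    obtain ⟨mv, h⟩ := j
    rw [Set.mem_Icc]
    by_cases j0 : mv = 0
    · rw [hv0 mv h j0]; norm_num
    by_cases j1 : mv = 1
    · rw [hv1 mv h j1]; norm_num
    by_cases jm : mv ≤ k+2
    · rw [hvm mv h (by omega) jm]
      obtain ⟨hl, hu⟩ := hdiv (mv-2) (by omega)
      constructor <;> linarith
    by_cases j3 : mv = k+3
    · rw [hv3 mv h j3]; norm_num
    · rw [hv4 mv h (by omega)]; norm_num
  · rw [aux_ge I hM hMlast A]
    intro i
    obtain ⟨m, hm⟩ := i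
    simp only [Fin.castSucc_mk, Fin.succ_mk]
    by_cases h0 : m = 0
    · subst h0
      rw [hd0, hv0 0 (by omega) rfl, hv1 1 (by omega) rfl]
      norm_num
    by_cases h1 : m = 1
    · subst h1
      rw [hd1, hv1 1 (by omega) rfl, hvm (1+1) (by omega) (by omega) (by omega)]
      have he : (1+1-2 : ℕ) = 0 := rfl
      rw [he, hS0]
      norm_num
    by_cases h2 : m = k+2
    · subst h2
      rw [hd2, hvm (k+2) (by omega) (by omega) (by omega), hv3 (k+2+1) (by omega) rfl]
      have he : (k+2-2 : ℕ) = k := by omega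
      rw [he, hSk]
      norm_num
    by_cases h3 : m = k+3
    · subst h3
      rw [hd3, hv3 (k+3) (by omega) rfl, hv4 (k+3+1) (by omega) rfl]
      norm_num
    -- middle edges
    obtain ⟨j, rfl⟩ : ∃ j, m = j + 2 := ⟨m - 2, by omega⟩
    have hj : j < k := by omega
    have hd : I.d ⟨j+2, by omega⟩ ⟨j+2+1, by omega⟩ = (w ⟨j, hj⟩ : ℝ) / B := hdw ⟨j, hj⟩
    rw [hd, hvm (j+2) (by omega) (by omega) (by omega),
      hvm (j+2+1) (by omega) (by omega) (by omega)]
    have e1 : (j+2) - 2 = j := by omega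
    have e2 : (j+2+1) - 2 = j+1 := by omega
    rw [e1, e2]
    have hstep : S (j+1) = S j + t j := by
      simp only [hS]
      rw [Finset.sum_range_succ]
    have htj : t j = if (⟨j, hj⟩ : Fin k) ∈ X then (w ⟨j, hj⟩ : ℝ) else -(w ⟨j, hj⟩ : ℝ) := by
      simp only [ht]
      rw [dif_pos hj]
    have harith : (1/2 + S j / B) - (1/2 + S (j+1) / B) = -(t j / B) := by
      rw [hstep]; ring
    rw [harith, abs_neg, abs_div]
    have hBabs : |(B:ℝ)| = B := abs_of_nonneg (by positivity)
    have htabs : |t j| = (w ⟨j, hj⟩ : ℝ) := by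
      rw [htj]; split_ifs
      · exact abs_of_nonneg (by positivity)
      · rw [abs_neg]; exact abs_of_nonneg (by positivity)
    rw [hBabs, htabs]

/-- The path DPG built from positive integer weights `w` (as in the reduction from
BalancedPartition, with `k+5` agents indexed `0, …, k+4`) admits a location profile of
social welfare at least `k+4` iff the weights can be partitioned into two sets of equal
total weight. -/
theorem stmt10 (k : ℕ) (w : Fin k → ℕ) (hw : ∀ i, 0 < w i) (B : ℕ)
    (hB : B = ∑ i, w i) (hw2 : ∀ i, 2 * w i ≤ B)
    (I : DPG (Fin (k+5)))
    (hM : ∀ (i : Fin (k+5)) (h : (i:ℕ)+1 < k+5), I.M i = {⟨(i:ℕ)+1, h⟩})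
    (hMlast : I.M ⟨k+4, by omega⟩ = ∅)
    (hd0 : I.d ⟨0, by omega⟩ ⟨1, by omega⟩ = 1)
    (hd1 : I.d ⟨1, by omega⟩ ⟨2, by omega⟩ = 1/2)
    (hdw : ∀ i : Fin k, I.d ⟨(i:ℕ)+2, by have := i.isLt; omega⟩
        ⟨(i:ℕ)+3, by have := i.isLt; omega⟩ = (w i : ℝ) / B)
    (hd2 : I.d ⟨k+2, by omega⟩ ⟨k+3, by omega⟩ = 1/2)
    (hd3 : I.d ⟨k+3, by omega⟩ ⟨k+4, by omega⟩ = 1) :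
    (∃ A : Fin (k+5) → ℝ, IsProfile A ∧ (k + 4 : ℝ) ≤ I.SW A) ↔
      ∃ X : Finset (Fin k), ∑ i ∈ X, w i = ∑ i ∈ Xᶜ, w i := by
  constructor
  · rintro ⟨A, hA, hSW⟩
    exact fwd k w hw B hB I hd0 hd1 hdw hd2 hd3 A hA ((aux_ge I hM hMlast A).mp hSW)
  · rintro ⟨X, hX⟩
    exact bwd k w hw B hB I hM hMlast hd0 hd1 hdw hd2 hd3 X hX
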